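/- arXiv:2312.11182 — 3 statements merged into one kernel-verified Lean document; each statement's English description precedes it below -/
import Mathlib

section
/- Let A be a linear operator on ℝ^d leaving a closed, solid, pointed convex cone K invariant, and suppose not all eigenvalues of A have the same modulus. Let ρ₂ < ρ(A) be the second largest modulus of eigenvalues of A, and let V be the subspace of vectors x with ‖A^j x‖ ≤ C j^r ρ₂^j for some constants. Then V does not intersect the interior of K. -/
open Filter

/-- Spectral radius of a continuous linear operator, via the Gelfand formula. -/
noncomputable def specRad {F : Type*} [NormedAddCommGroup F] [NormedSpace ℝ F]
    (B : F →L[ℝ] F) : ℝ :=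
  Filter.atTop.limsup fun j : ℕ => ‖B ^ j‖ ^ ((j : ℝ)⁻¹)

theorem cone_normal {d : ℕ} (K : Set (EuclideanSpace ℝ (Fin d)))
    (hKclosed : IsClosed K)
    (hKsmul : ∀ x ∈ K, ∀ t : ℝ, 0 < t → t • x ∈ K)
    (hKpointed : ∀ x ∈ K, -x ∈ K → x = 0) :
    ∃ c : ℝ, 0 < c ∧ ∀ u ∈ K, ∀ v ∈ K, c * ‖u‖ ≤ ‖u + v‖ := by
  by_cases hS : (K ∩ Metric.sphere 0 1).Nonempty
  · -- compact minimization
    have hT : IsCompact ((K ∩ Metric.sphere (0:EuclideanSpace ℝ (Fin d)) 1) ×ˢ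
        (K ∩ Metric.closedBall (0:EuclideanSpace ℝ (Fin d)) 2)) :=
      (((isCompact_sphere 0 1).inter_left hKclosed).prod
        ((isCompact_closedBall 0 2).inter_left hKclosed))
    obtain ⟨u₀, hu₀K, hu₀s⟩ := hS
    have hTne : ((K ∩ Metric.sphere (0:EuclideanSpace ℝ (Fin d)) 1) ×ˢ
        (K ∩ Metric.closedBall (0:EuclideanSpace ℝ (Fin d)) 2)).Nonempty := by
      refine ⟨(u₀, u₀), ⟨⟨hu₀K, hu₀s⟩, ⟨hu₀K, ?_⟩⟩⟩
      simp only [Metric.mem_closedBall, dist_zero_right]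
      have : ‖u₀‖ = 1 := by simpa [Metric.mem_sphere, dist_zero_right] using hu₀s
      linarith
    obtain ⟨p, hp, hmin⟩ := hT.exists_isMinOn hTne
      (Continuous.continuousOn (by continuity :
        Continuous fun q : (EuclideanSpace ℝ (Fin d)) × (EuclideanSpace ℝ (Fin d)) => ‖q.1 + q.2‖))
    have hp1 : p.1 ∈ K ∧ ‖p.1‖ = 1 := by
      obtain ⟨⟨h1, h2⟩, _⟩ := hp
      exact ⟨h1, by simpa [Metric.mem_sphere, dist_zero_right] using h2⟩
    have hp2 : p.2 ∈ K := hp.2.1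
    have hc0 : 0 < ‖p.1 + p.2‖ := by
      rcases eq_or_lt_of_le (norm_nonneg (p.1 + p.2)) with h | h
      · exfalso
        have hz : p.1 + p.2 = 0 := by
          have := h.symm
          simpa [norm_eq_zero] using this
        have hneg : -p.1 ∈ K := by
          have : p.2 = -p.1 := by linear_combination (norm := module) hz
          rwa [← this]
        have := hKpointed p.1 hp1.1 hneg
        rw [this] at hp1
        simp at hp1
      · exact h
    refine ⟨min ‖p.1 + p.2‖ 1, lt_min hc0 one_pos, ?_⟩
    have key : ∀ u ∈ K, ‖u‖ = 1 → ∀ v ∈ K, min ‖p.1 + p.2‖ 1 ≤ ‖u + v‖ := by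
      intro u huK hu1 v hvK
      by_cases hv2 : ‖v‖ ≤ 2
      · refine le_trans (min_le_left _ _) ?_
        exact hmin (a := (u, v)) ⟨⟨huK, by simpa [Metric.mem_sphere, dist_zero_right] using hu1⟩,
          ⟨hvK, by simpa [Metric.mem_closedBall, dist_zero_right] using hv2⟩⟩
      · refine le_trans (min_le_right _ _) ?_
        have h0 := norm_sub_norm_le v (-u)
        have h2 : ‖v - -u‖ = ‖u + v‖ := by congr 1; abel
        rw [h2, norm_neg] at h0
        push_neg at hv2
        linarith
    intro u huK v hvK
    rcases eq_or_ne u 0 with rfl | hu0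
    · simp [norm_nonneg]
    · have hnu : 0 < ‖u‖ := norm_pos_iff.2 hu0
      have h1 : ‖u‖⁻¹ • u ∈ K := hKsmul u huK _ (inv_pos.2 hnu)
      have h2 : ‖u‖⁻¹ • v ∈ K := hKsmul v hvK _ (inv_pos.2 hnu)
      have h3 : ‖‖u‖⁻¹ • u‖ = 1 := by
        rw [norm_smul, norm_inv, norm_norm, inv_mul_cancel₀ (ne_of_gt hnu)]
      have h4 := key _ h1 h3 _ h2
      have h5 : ‖u‖⁻¹ • u + ‖u‖⁻¹ • v = ‖u‖⁻¹ • (u + v) := by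
        rw [smul_add]
      rw [h5, norm_smul, norm_inv, norm_norm] at h4
      calc min ‖p.1 + p.2‖ 1 * ‖u‖ ≤ (‖u‖⁻¹ * ‖u + v‖) * ‖u‖ :=
            mul_le_mul_of_nonneg_right h4 (norm_nonneg u)
        _ = ‖u + v‖ := by field_simp
  · -- K ⊆ {0}
    refine ⟨1, one_pos, ?_⟩
    intro u huK v hvK
    rcases eq_or_ne u 0 with rfl | hu0
    · simp
    · exfalso
      have hnu : 0 < ‖u‖ := norm_pos_iff.2 hu0
      refine hS ⟨‖u‖⁻¹ • u, hKsmul u huK _ (inv_pos.2 hnu), ?_⟩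
      simp only [Metric.mem_sphere, dist_zero_right, norm_smul, norm_inv, norm_norm]
      exact inv_mul_cancel₀ (ne_of_gt hnu)

/-- if `A` leaves a closed solid pointed convex cone `K` invariant,
`ρ₂ < ρ(A)`, and `V = {x : limsup ‖A^j x‖^{1/j} ≤ ρ₂}`, then `V` does not meet the
interior of `K`. -/
theorem stmt0 {d : ℕ} (A : EuclideanSpace ℝ (Fin d) →L[ℝ] EuclideanSpace ℝ (Fin d))
    (K : Set (EuclideanSpace ℝ (Fin d)))
    (hKclosed : IsClosed K)
    (hKadd : ∀ x ∈ K, ∀ y ∈ K, x + y ∈ K)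
    (hKsmul : ∀ x ∈ K, ∀ t : ℝ, 0 < t → t • x ∈ K)
    (hKsolid : (interior K).Nonempty)
    (hKpointed : ∀ x ∈ K, -x ∈ K → x = 0)
    (hKinv : ∀ x ∈ K, A x ∈ K)
    (ρ₂ : ℝ) (hρ₂ : ρ₂ < specRad A)
    (V : Set (EuclideanSpace ℝ (Fin d)))
    (hV : V = {x | Filter.atTop.limsup (fun j : ℕ => ‖(A ^ j) x‖ ^ ((j : ℝ)⁻¹)) ≤ ρ₂}) :
    V ∩ interior K = ∅ := by
  rw [Set.eq_empty_iff_forall_notMem]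
  rintro x0 ⟨hxV0, hxi⟩
  rw [hV] at hxV0
  have hxV : Filter.atTop.limsup (fun j : ℕ => ‖(A ^ j) x0‖ ^ ((j : ℝ)⁻¹)) ≤ ρ₂ := hxV0
  obtain ⟨c, hc, hnormal⟩ := cone_normal K hKclosed hKsmul hKpointed
  obtain ⟨ε, hε, hball⟩ := Metric.mem_nhds_iff.1 (mem_interior_iff_mem_nhds.1 hxi)
  -- powers of A preserve K
  have hpow : ∀ j : ℕ, ∀ z ∈ K, (A ^ j) z ∈ K := by
    intro j
    induction j with
    | zero => intro z hz; simpa using hz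
    | succ n ih =>
      intro z hz
      rw [pow_succ]
      exact ih _ (hKinv z hz)
  set δ := ε / 2 with hδdef
  have hδ : 0 < δ := by positivity
  set M := (2 / c + 1) / δ with hMdef
  have hM0 : 0 < M := by positivity
  -- key pointwise bound
  have hkey : ∀ (j : ℕ) (y : EuclideanSpace ℝ (Fin d)),
      ‖(A ^ j) y‖ ≤ (M * ‖(A ^ j) x0‖) * ‖y‖ := by
    intro j y
    rcases eq_or_ne y 0 with rfl | hy0
    · simp
    · have hny : 0 < ‖y‖ := norm_pos_iff.2 hy0
      set w := (δ / ‖y‖) • y with hwdef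
      have hnw : ‖w‖ = δ := by
        rw [hwdef, norm_smul, Real.norm_eq_abs, abs_of_pos (by positivity),
          div_mul_cancel₀ _ (ne_of_gt hny)]
      have hwK : x0 + w ∈ K := by
        apply hball
        simp only [Metric.mem_ball, dist_self_add_left, hnw]
        linarith
      have hwK' : x0 - w ∈ K := by
        apply hball
        simp only [Metric.mem_ball, dist_self_sub_left, hnw]
        linarith
      have huK : (A ^ j) (x0 + w) ∈ K := hpow j _ hwK
      have hvK : (A ^ j) (x0 - w) ∈ K := hpow j _ hwK'
      have hsum : (A ^ j) (x0 + w) + (A ^ j) (x0 - w) = (2 : ℝ) • (A ^ j) x0 := by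
        have hxx : x0 + w + (x0 - w) = (2 : ℝ) • x0 := by module
        rw [← map_add, hxx, map_smul]
      have h1 : c * ‖(A ^ j) (x0 + w)‖ ≤ 2 * ‖(A ^ j) x0‖ := by
        have := hnormal _ huK _ hvK
        rw [hsum, norm_smul] at this
        simpa using this
      have h2 : ‖(A ^ j) w‖ ≤ (2 / c + 1) * ‖(A ^ j) x0‖ := by
        have heq : (A ^ j) w = (A ^ j) (x0 + w) - (A ^ j) x0 := by
          rw [← map_sub]; congr 1; abel
        rw [heq]
        have h3 : ‖(A ^ j) (x0 + w)‖ ≤ (2 / c) * ‖(A ^ j) x0‖ := by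
          rw [div_mul_eq_mul_div, le_div_iff₀ hc, mul_comm]
          linarith
        calc ‖(A ^ j) (x0 + w) - (A ^ j) x0‖ ≤ ‖(A ^ j) (x0 + w)‖ + ‖(A ^ j) x0‖ :=
              norm_sub_le _ _
          _ ≤ (2 / c) * ‖(A ^ j) x0‖ + ‖(A ^ j) x0‖ := by linarith
          _ = (2 / c + 1) * ‖(A ^ j) x0‖ := by ring
      have h4 : ‖(A ^ j) w‖ = (δ / ‖y‖) * ‖(A ^ j) y‖ := by
        rw [hwdef, map_smul, norm_smul, Real.norm_eq_abs, abs_of_pos (by positivity)]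
      rw [h4] at h2
      rw [div_mul_eq_mul_div, div_le_iff₀ hny] at h2
      rw [hMdef, div_mul_eq_mul_div, div_mul_eq_mul_div, le_div_iff₀ hδ]
      linarith
  have hop : ∀ j : ℕ, ‖A ^ j‖ ≤ M * ‖(A ^ j) x0‖ := fun j =>
    ContinuousLinearMap.opNorm_le_bound _ (by positivity) (hkey j)
  -- analysis
  set ρ' := (ρ₂ + specRad A) / 2 with hρ'def
  have hρ'1 : ρ₂ < ρ' := by rw [hρ'def]; linarith
  have hρ'2 : ρ' < specRad A := by rw [hρ'def]; linarith
  -- boundedness of the normalized sequence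
  have hbdd : IsBoundedUnder (· ≤ ·) atTop
      (fun j : ℕ => ‖(A ^ j) x0‖ ^ ((j : ℝ)⁻¹)) := by
    refine isBoundedUnder_of ⟨max 1 (‖A‖ * max 1 ‖x0‖), ?_⟩
    intro j
    rcases Nat.eq_zero_or_pos j with rfl | hj
    · simp only [Nat.cast_zero, inv_zero, Real.rpow_zero]
      exact le_max_left _ _
    · have hj0 : j ≠ 0 := Nat.pos_iff_ne_zero.1 hj
      have h1 : ‖(A ^ j) x0‖ ≤ ‖A‖ ^ j * ‖x0‖ :=
        le_trans ((A ^ j).le_opNorm x0)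
          (mul_le_mul_of_nonneg_right (norm_pow_le' A hj) (norm_nonneg _))
      have h2 : ‖(A ^ j) x0‖ ^ ((j : ℝ)⁻¹) ≤ (‖A‖ ^ j * ‖x0‖) ^ ((j : ℝ)⁻¹) :=
        Real.rpow_le_rpow (norm_nonneg _) h1 (by positivity)
      rw [Real.mul_rpow (by positivity) (norm_nonneg _),
        Real.pow_rpow_inv_natCast (norm_nonneg A) hj0] at h2
      have h3 : ‖x0‖ ^ ((j : ℝ)⁻¹) ≤ max 1 ‖x0‖ := by
        by_cases hx : ‖x0‖ ≤ 1
        · exact le_trans (Real.rpow_le_one (norm_nonneg _) hx (by positivity)) (le_max_left _ _)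
        · push_neg at hx
          refine le_trans ?_ (le_max_right _ _)
          have : ‖x0‖ ^ ((j : ℝ)⁻¹) ≤ ‖x0‖ ^ (1 : ℝ) := by
            apply Real.rpow_le_rpow_of_exponent_le hx.le
            rw [inv_le_one_iff₀]
            right
            exact_mod_cast hj
          simpa using this
      refine le_trans h2 (le_trans ?_ (le_max_right _ _))
      exact mul_le_mul_of_nonneg_left h3 (norm_nonneg A)
  have hev : ∀ᶠ j : ℕ in atTop, ‖(A ^ j) x0‖ ^ ((j : ℝ)⁻¹) < ρ' :=
    Filter.eventually_lt_of_limsup_lt (lt_of_le_of_lt hxV hρ'1) hbdd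
  -- eventual bound on op norms
  have hle : ∀ᶠ j : ℕ in atTop,
      ‖A ^ j‖ ^ ((j : ℝ)⁻¹) ≤ M ^ ((j : ℝ)⁻¹) * ρ' := by
    filter_upwards [hev, eventually_ge_atTop 1] with j htj hj
    have hj0 : j ≠ 0 := by omega
    have hρ'pos : 0 < ρ' := lt_of_le_of_lt (Real.rpow_nonneg (norm_nonneg _) _) htj
    have hfj : ‖(A ^ j) x0‖ ≤ ρ' ^ j := by
      have := pow_lt_pow_left₀ htj (Real.rpow_nonneg (norm_nonneg _) _) hj0
      rw [Real.rpow_inv_natCast_pow (norm_nonneg _) hj0] at this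
      exact this.le
    have hgj : ‖A ^ j‖ ≤ M * ρ' ^ j :=
      le_trans (hop j) (mul_le_mul_of_nonneg_left hfj hM0.le)
    have h5 : ‖A ^ j‖ ^ ((j : ℝ)⁻¹) ≤ (M * ρ' ^ j) ^ ((j : ℝ)⁻¹) :=
      Real.rpow_le_rpow (norm_nonneg _) hgj (by positivity)
    rwa [Real.mul_rpow hM0.le (pow_nonneg hρ'pos.le _),
      Real.pow_rpow_inv_natCast hρ'pos.le hj0] at h5
  -- the comparison sequence tends to ρ'
  have h1 : Tendsto (fun j : ℕ => ((j : ℝ))⁻¹) atTop (nhds 0) :=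
    tendsto_inv_atTop_zero.comp tendsto_natCast_atTop_atTop
  have h2 : Tendsto (fun j : ℕ => M ^ ((j : ℝ)⁻¹)) atTop (nhds 1) := by
    have := (Real.continuousAt_const_rpow (a := M) (b := 0) (ne_of_gt hM0)).tendsto.comp h1
    simpa [Real.rpow_zero, Function.comp_def] using this
  have htendq : Tendsto (fun j : ℕ => M ^ ((j : ℝ)⁻¹) * ρ') atTop (nhds ρ') := by
    have := h2.mul_const ρ'
    simpa using this
  have hcobdd : IsCoboundedUnder (· ≤ ·) atTop (fun j : ℕ => ‖A ^ j‖ ^ ((j : ℝ)⁻¹)) := by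
    refine Filter.IsBoundedUnder.isCoboundedUnder_le ?_
    refine isBoundedUnder_of ⟨0, ?_⟩
    intro j
    exact Real.rpow_nonneg (norm_nonneg _) _
  have hfinal : specRad A ≤ ρ' := by
    rw [specRad]
    calc Filter.atTop.limsup (fun j : ℕ => ‖A ^ j‖ ^ ((j : ℝ)⁻¹))
        ≤ Filter.atTop.limsup (fun j : ℕ => M ^ ((j : ℝ)⁻¹) * ρ') :=
          Filter.limsup_le_limsup hle hcobdd htendq.isBoundedUnder_le
      _ = ρ' := htendq.limsup_eq
  linarith
end

section
/- With 𝒫 the space of real trigonometric polynomials with frequencies in a finite symmetric set Ω ⊂ ℤ^n containing 0, every face L of the cone 𝒫₊ of nonnegative polynomials has the form L = {p ∈ 𝒫₊ : p(ξ) = 0 for all ξ ∈ S} for a suitable compact subset S of the torus 𝕋^n. -/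
open scoped Real

/-- Evaluation of the trigonometric polynomial with coefficients `c` supported on `Ω`. -/
noncomputable def trigEval {n : ℕ} (Ω : Finset (Fin n → ℤ)) (c : {k // k ∈ Ω} → ℝ)
    (ξ : Fin n → ℝ) : ℂ :=
  ∑ k : {k // k ∈ Ω}, (c k : ℂ) *
    Complex.exp (2 * (Real.pi : ℂ) * Complex.I * (∑ i, ((k : Fin n → ℤ) i : ℝ) * ξ i))

/-- Symmetry of the coefficients: `p_{-k} = p_k`. -/
def SymCoeff {n : ℕ} (Ω : Finset (Fin n → ℤ)) (c : {k // k ∈ Ω} → ℝ) : Prop :=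
  ∀ (k : Fin n → ℤ) (hk : k ∈ Ω) (hk' : -k ∈ Ω), c ⟨-k, hk'⟩ = c ⟨k, hk⟩

/-- The cone of (coefficient vectors of) pointwise nonnegative real trigonometric
polynomials with spectrum in `Ω`. -/
def posTrigCone {n : ℕ} (Ω : Finset (Fin n → ℤ)) : Set ({k // k ∈ Ω} → ℝ) :=
  {c | SymCoeff Ω c ∧ ∀ ξ : Fin n → ℝ, (trigEval Ω c ξ).im = 0 ∧ 0 ≤ (trigEval Ω c ξ).re}

open scoped RealInnerProductSpace

namespace Stmt5Aux

noncomputable def theta {n : ℕ} (Ω : Finset (Fin n → ℤ)) (k : {k // k ∈ Ω}) (ξ : Fin n → ℝ) : ℝ :=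
  2 * Real.pi * ∑ i, ((k : Fin n → ℤ) i : ℝ) * ξ i

/-- Pad a convex-hull representation to exactly `finrank + 1` points. -/
lemma pad_convexHull {V : Type*} [AddCommGroup V] [Module ℝ V] [FiniteDimensional ℝ V]
    {D : Set V} {x : V} (hx : x ∈ convexHull ℝ D) :
    ∃ (w : Fin (Module.finrank ℝ V + 1) → ℝ) (z : Fin (Module.finrank ℝ V + 1) → V),
      (∀ j, 0 ≤ w j) ∧ ∑ j, w j = 1 ∧ (∀ j, z j ∈ D) ∧ ∑ j, w j • z j = x := by
  classical
  obtain ⟨ι', hfin, z, w, hrange, hai, hpos, hsum, hrep⟩ :=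
    eq_pos_convex_span_of_mem_convexHull hx
  have hne : Nonempty ι' := by
    by_contra h
    rw [not_nonempty_iff] at h
    rw [Finset.univ_eq_empty, Finset.sum_empty] at hsum
    exact one_ne_zero hsum.symm
  have hcard : Fintype.card ι' ≤ Fintype.card (Fin (Module.finrank ℝ V + 1)) := by
    rw [Fintype.card_fin]
    exact hai.card_le_finrank_succ.trans (Nat.add_le_add_right (Submodule.finrank_le _) 1)
  obtain ⟨e⟩ := Function.Embedding.nonempty_of_card_le hcard
  set x₀ : V := z (Classical.arbitrary ι') with hx₀
  refine ⟨Function.extend e w 0, Function.extend e z (fun _ => x₀), ?_, ?_, ?_, ?_⟩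
  · intro j
    by_cases h : ∃ i, e i = j
    · obtain ⟨i, rfl⟩ := h
      rw [e.injective.extend_apply]
      exact (hpos i).le
    · rw [Function.extend_apply' _ _ _ h]
      exact le_rfl
  · have h0 : ∀ j ∈ Finset.univ \ Finset.univ.map e, Function.extend e w 0 j = 0 := by
      intro j hj
      rw [Finset.mem_sdiff, Finset.mem_map] at hj
      refine Function.extend_apply' _ _ _ ?_
      rintro ⟨i, rfl⟩
      exact hj.2 ⟨i, Finset.mem_univ i, rfl⟩
    rw [← Finset.sum_subset (Finset.subset_univ (Finset.univ.map e))
      (fun j _ hj => h0 j (Finset.mem_sdiff.2 ⟨Finset.mem_univ j, hj⟩)), Finset.sum_map]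
    simpa only [Function.Embedding.coeFn_mk, e.injective.extend_apply] using hsum
  · intro j
    by_cases h : ∃ i, e i = j
    · obtain ⟨i, rfl⟩ := h
      rw [e.injective.extend_apply]
      exact hrange (Set.mem_range_self i)
    · rw [Function.extend_apply' _ _ _ h]
      exact hrange (Set.mem_range_self _)
  · have hptwise : ∀ j, Function.extend e w 0 j • Function.extend e z (fun _ => x₀) j
        = Function.extend e (fun i => w i • z i) 0 j := by
      intro j
      by_cases h : ∃ i, e i = j
      · obtain ⟨i, rfl⟩ := h
        rw [e.injective.extend_apply, e.injective.extend_apply, e.injective.extend_apply]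
      · rw [Function.extend_apply' _ _ _ h, Function.extend_apply' _ _ _ h,
          Function.extend_apply' _ _ _ h]
        simp
    rw [Finset.sum_congr rfl fun j _ => hptwise j]
    have h0 : ∀ j ∈ Finset.univ \ Finset.univ.map e,
        Function.extend e (fun i => w i • z i) 0 j = 0 := by
      intro j hj
      rw [Finset.mem_sdiff, Finset.mem_map] at hj
      refine Function.extend_apply' _ _ _ ?_
      rintro ⟨i, rfl⟩
      exact hj.2 ⟨i, Finset.mem_univ i, rfl⟩
    rw [← Finset.sum_subset (Finset.subset_univ (Finset.univ.map e))
      (fun j _ hj => h0 j (Finset.mem_sdiff.2 ⟨Finset.mem_univ j, hj⟩)), Finset.sum_map]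
    simpa only [Function.Embedding.coeFn_mk, e.injective.extend_apply] using hrep


lemma trigEval_re {n : ℕ} (Ω : Finset (Fin n → ℤ)) (c : {k // k ∈ Ω} → ℝ) (ξ : Fin n → ℝ) :
    (trigEval Ω c ξ).re = ∑ k, c k * Real.cos (theta Ω k ξ) := by
  rw [trigEval, Complex.re_sum]
  refine Finset.sum_congr rfl fun k _ => ?_
  have : (2 * (Real.pi : ℂ) * Complex.I * ((∑ i, ((k : Fin n → ℤ) i : ℝ) * ξ i : ℝ) : ℂ))
      = ((theta Ω k ξ : ℝ) : ℂ) * Complex.I := by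
    rw [theta]; push_cast; ring
  rw [this]
  simp [Complex.mul_re, Complex.exp_ofReal_mul_I_re, Complex.exp_ofReal_mul_I_im]

lemma trigEval_im {n : ℕ} (Ω : Finset (Fin n → ℤ)) (c : {k // k ∈ Ω} → ℝ) (ξ : Fin n → ℝ) :
    (trigEval Ω c ξ).im = ∑ k, c k * Real.sin (theta Ω k ξ) := by
  rw [trigEval, Complex.im_sum]
  refine Finset.sum_congr rfl fun k _ => ?_
  have : (2 * (Real.pi : ℂ) * Complex.I * ((∑ i, ((k : Fin n → ℤ) i : ℝ) * ξ i : ℝ) : ℂ))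
      = ((theta Ω k ξ : ℝ) : ℂ) * Complex.I := by
    rw [theta]; push_cast; ring
  rw [this]
  simp [Complex.mul_im, Complex.exp_ofReal_mul_I_re, Complex.exp_ofReal_mul_I_im]


variable {n : ℕ} {Ω : Finset (Fin n → ℤ)}

/-- Negation as an equivalence of the index type. -/
def negE (hsym : ∀ k ∈ Ω, -k ∈ Ω) : {k // k ∈ Ω} ≃ {k // k ∈ Ω} where
  toFun k := ⟨-k.1, hsym k.1 k.2⟩
  invFun k := ⟨-k.1, hsym k.1 k.2⟩
  left_inv k := Subtype.ext (neg_neg _)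
  right_inv k := Subtype.ext (neg_neg _)

lemma negE_negE (hsym : ∀ k ∈ Ω, -k ∈ Ω) (k : {k // k ∈ Ω}) :
    negE hsym (negE hsym k) = k := Subtype.ext (neg_neg _)

lemma theta_negE (hsym : ∀ k ∈ Ω, -k ∈ Ω) (k : {k // k ∈ Ω}) (ξ : Fin n → ℝ) :
    theta Ω (negE hsym k) ξ = - theta Ω k ξ := by
  simp only [theta, negE, Equiv.coe_fn_mk]
  rw [← mul_neg, ← Finset.sum_neg_distrib]
  congr 1
  refine Finset.sum_congr rfl fun i _ => ?_
  rw [Pi.neg_apply]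
  push_cast
  ring

lemma symCoeff_iff (hsym : ∀ k ∈ Ω, -k ∈ Ω) (c : {k // k ∈ Ω} → ℝ) :
    SymCoeff Ω c ↔ ∀ k, c (negE hsym k) = c k := by
  constructor
  · intro h k
    exact h k.1 k.2 (hsym k.1 k.2)
  · intro h k hk hk'
    exact h ⟨k, hk⟩

/-- Symmetrization operator. -/
noncomputable def symmize (hsym : ∀ k ∈ Ω, -k ∈ Ω) :
    ({k // k ∈ Ω} → ℝ) →ₗ[ℝ] ({k // k ∈ Ω} → ℝ) :=
  (2⁻¹ : ℝ) • (LinearMap.id + LinearMap.funLeft ℝ ℝ (negE hsym))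

lemma symmize_apply (hsym : ∀ k ∈ Ω, -k ∈ Ω) (c : {k // k ∈ Ω} → ℝ) (k : {k // k ∈ Ω}) :
    symmize hsym c k = 2⁻¹ * (c k + c (negE hsym k)) := rfl

lemma symCoeff_symmize (hsym : ∀ k ∈ Ω, -k ∈ Ω) (c : {k // k ∈ Ω} → ℝ) :
    SymCoeff Ω (symmize hsym c) := by
  rw [symCoeff_iff hsym]
  intro k
  rw [symmize_apply, symmize_apply, negE_negE]
  ring

lemma symmize_of_symCoeff (hsym : ∀ k ∈ Ω, -k ∈ Ω) {c : {k // k ∈ Ω} → ℝ}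
    (h : SymCoeff Ω c) : symmize hsym c = c := by
  funext k
  rw [symmize_apply, (symCoeff_iff hsym c).1 h k]
  ring

lemma trigEval_im_eq_zero (hsym : ∀ k ∈ Ω, -k ∈ Ω) {c : {k // k ∈ Ω} → ℝ}
    (h : SymCoeff Ω c) (ξ : Fin n → ℝ) : (trigEval Ω c ξ).im = 0 := by
  rw [trigEval_im Ω c ξ]
  have hrw := Equiv.sum_comp (negE hsym) (fun k => c k * Real.sin (theta Ω k ξ))
  have hzero : (∑ k, c k * Real.sin (theta Ω k ξ)) + (∑ k, c k * Real.sin (theta Ω k ξ)) = 0 := by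
    nth_rewrite 1 [← hrw]
    rw [← Finset.sum_add_distrib]
    refine Finset.sum_eq_zero fun k _ => ?_
    rw [theta_negE, Real.sin_neg, (symCoeff_iff hsym c).1 h k]
    ring
  linarith

/-- Symmetrization doesn't change the "cosine pairing". -/
lemma sum_symmize_cos (hsym : ∀ k ∈ Ω, -k ∈ Ω) (c : {k // k ∈ Ω} → ℝ) (ξ : Fin n → ℝ) :
    ∑ k, symmize hsym c k * Real.cos (theta Ω k ξ) = ∑ k, c k * Real.cos (theta Ω k ξ) := by
  have key : ∑ k, c (negE hsym k) * Real.cos (theta Ω k ξ)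
      = ∑ k, c k * Real.cos (theta Ω k ξ) := by
    have hrw := Equiv.sum_comp (negE hsym) (fun k => c (negE hsym k) * Real.cos (theta Ω k ξ))
    rw [← hrw]
    refine Finset.sum_congr rfl fun j _ => ?_
    rw [negE_negE, theta_negE, Real.cos_neg]
  calc ∑ k, symmize hsym c k * Real.cos (theta Ω k ξ)
      = ∑ k, 2⁻¹ * (c k * Real.cos (theta Ω k ξ) + c (negE hsym k) * Real.cos (theta Ω k ξ)) := by
        refine Finset.sum_congr rfl fun k _ => ?_
        rw [symmize_apply]; ring
    _ = _ := by
        rw [← Finset.mul_sum, Finset.sum_add_distrib, key]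
        ring


noncomputable def uvec (Ω : Finset (Fin n → ℤ)) (ξ : Fin n → ℝ) :
    EuclideanSpace ℝ {k // k ∈ Ω} := WithLp.toLp 2 fun k => Real.cos (theta Ω k ξ)

lemma continuous_uvec : Continuous (uvec Ω) := by
  exact (PiLp.continuousLinearEquiv 2 ℝ (fun _ : {k // k ∈ Ω} => ℝ)).symm.continuous.comp
    (continuous_pi fun k => Real.continuous_cos.comp
      (continuous_const.mul (continuous_finset_sum _ fun i _ =>
        continuous_const.mul (continuous_apply i))))

lemma cos_theta_fract (k : {k // k ∈ Ω}) (ξ : Fin n → ℝ) :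
    Real.cos (theta Ω k fun i => Int.fract (ξ i)) = Real.cos (theta Ω k ξ) := by
  have h : theta Ω k (fun i => Int.fract (ξ i))
      = theta Ω k ξ + (-(∑ i, (k : Fin n → ℤ) i * ⌊ξ i⌋) : ℤ) * (2 * Real.pi) := by
    have hsplit : ∑ i, ((k : Fin n → ℤ) i : ℝ) * (ξ i - ⌊ξ i⌋)
        = (∑ i, ((k : Fin n → ℤ) i : ℝ) * ξ i) - ∑ i, ((k : Fin n → ℤ) i : ℝ) * ⌊ξ i⌋ := by
      rw [← Finset.sum_sub_distrib]
      exact Finset.sum_congr rfl fun i _ => mul_sub _ _ _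
    simp only [theta, Int.fract]
    push_cast
    rw [hsplit]
    ring
  rw [h, Real.cos_add_int_mul_two_pi]

lemma mem_Icc_fract (ξ : Fin n → ℝ) : (fun i => Int.fract (ξ i)) ∈ Set.Icc (0 : Fin n → ℝ) 1 := by
  constructor
  · intro i
    exact Int.fract_nonneg _
  · intro i
    exact (Int.fract_lt_one _).le

lemma inner_uvec (ξ : Fin n → ℝ) (y : EuclideanSpace ℝ {k // k ∈ Ω}) :
    ⟪uvec Ω ξ, y⟫ = ∑ k, y k * Real.cos (theta Ω k ξ) := by
  rw [PiLp.inner_apply]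
  refine Finset.sum_congr rfl fun k _ => ?_
  rw [RCLike.inner_apply, starRingEnd_apply, star_trivial]
  rfl

lemma uvec_zero_coord (h0 : (0 : Fin n → ℤ) ∈ Ω) (ξ : Fin n → ℝ) :
    uvec Ω ξ ⟨0, h0⟩ = 1 := by
  have : theta Ω ⟨0, h0⟩ ξ = 0 := by
    simp [theta]
  rw [uvec, PiLp.toLp_apply, this, Real.cos_zero]

noncomputable def Dset (Ω : Finset (Fin n → ℤ)) : Set (EuclideanSpace ℝ {k // k ∈ Ω}) :=
  uvec Ω '' Set.Icc 0 1

lemma isCompact_Dset : IsCompact (Dset Ω) :=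
  isCompact_Icc.image continuous_uvec

lemma coord_one_of_mem_hull (h0 : (0 : Fin n → ℤ) ∈ Ω)
    {x : EuclideanSpace ℝ {k // k ∈ Ω}} (hx : x ∈ convexHull ℝ (Dset Ω)) :
    x ⟨0, h0⟩ = 1 := by
  have hconv : Convex ℝ {y : EuclideanSpace ℝ {k // k ∈ Ω} | y ⟨0, h0⟩ = 1} := by
    intro y₁ h₁ y₂ h₂ a b ha hb hab
    simp only [Set.mem_setOf_eq] at h₁ h₂ ⊢
    have : (a • y₁ + b • y₂) ⟨0, h0⟩ = a * y₁ ⟨0, h0⟩ + b * y₂ ⟨0, h0⟩ := rfl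
    rw [this, h₁, h₂, mul_one, mul_one, hab]
  have hsub : Dset Ω ⊆ {y : EuclideanSpace ℝ {k // k ∈ Ω} | y ⟨0, h0⟩ = 1} := by
    rintro _ ⟨ξ, _, rfl⟩
    exact uvec_zero_coord h0 ξ
  exact convexHull_min hsub hconv hx

lemma isCompact_hull : IsCompact (convexHull ℝ (Dset Ω)) := by
  classical
  set E := EuclideanSpace ℝ {k // k ∈ Ω}
  set m := Module.finrank ℝ E + 1 with hm
  have himg : convexHull ℝ (Dset Ω) =
      (fun p : (Fin m → ℝ) × (Fin m → E) => ∑ j, p.1 j • p.2 j) ''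
        ((stdSimplex ℝ (Fin m)) ×ˢ Set.pi Set.univ fun _ => Dset Ω) := by
    apply Set.Subset.antisymm
    · intro x hx
      obtain ⟨w, z, hw, hw1, hz, hrep⟩ := pad_convexHull hx
      exact ⟨(w, z), ⟨⟨hw, hw1⟩, fun j _ => hz j⟩, hrep⟩
    · rintro _ ⟨⟨w, z⟩, ⟨⟨hw, hw1⟩, hz⟩, rfl⟩
      exact mem_convexHull_of_exists_fintype w z hw hw1 (fun j => hz j (Set.mem_univ j)) rfl
  rw [himg]
  exact (((isCompact_stdSimplex _ _).prod (isCompact_univ_pi fun _ => isCompact_Dset))).image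
    (continuous_finset_sum _ fun j _ =>
      (((continuous_apply j).comp continuous_fst).smul ((continuous_apply j).comp continuous_snd)))

/-- The cone over the convex hull of `Dset`. -/
noncomputable def Ccone (Ω : Finset (Fin n → ℤ)) :
    ConvexCone ℝ (EuclideanSpace ℝ {k // k ∈ Ω}) where
  carrier := {y | ∃ t : ℝ, 0 ≤ t ∧ ∃ x ∈ convexHull ℝ (Dset Ω), y = t • x}
  smul_mem' := by
    rintro s hs y ⟨t, ht, x, hx, rfl⟩
    exact ⟨s * t, mul_nonneg hs.le ht, x, hx, (mul_smul s t x).symm⟩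
  add_mem' := by
    rintro y₁ ⟨t₁, ht₁, x₁, hx₁, rfl⟩ y₂ ⟨t₂, ht₂, x₂, hx₂, rfl⟩
    rcases eq_or_lt_of_le (add_nonneg ht₁ ht₂) with h | h
    · have h1 : t₁ = 0 := by linarith
      have h2 : t₂ = 0 := by linarith
      refine ⟨0, le_rfl, x₁, hx₁, ?_⟩
      rw [h1, h2]
      simp
    · refine ⟨t₁ + t₂, h.le, (t₁ / (t₁ + t₂)) • x₁ + (t₂ / (t₁ + t₂)) • x₂, ?_, ?_⟩
      · exact (convex_convexHull ℝ (Dset Ω)) hx₁ hx₂ (div_nonneg ht₁ h.le) (div_nonneg ht₂ h.le)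
          (by field_simp)
      · have e1 : (t₁ + t₂) * (t₁ / (t₁ + t₂)) = t₁ := by
          rw [mul_comm, div_mul_cancel₀ _ h.ne']
        have e2 : (t₁ + t₂) * (t₂ / (t₁ + t₂)) = t₂ := by
          rw [mul_comm, div_mul_cancel₀ _ h.ne']
        rw [smul_add, smul_smul, smul_smul, e1, e2]


lemma isClosed_Ccone (h0 : (0 : Fin n → ℤ) ∈ Ω) :
    IsClosed (Ccone Ω : Set (EuclideanSpace ℝ {k // k ∈ Ω})) := by
  refine IsSeqClosed.isClosed ?_
  intro ys y hys hlim
  choose ts hts xs hxs hrep using hys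
  obtain ⟨x, hxK, φ, hφ, hxlim⟩ := isCompact_hull.tendsto_subseq hxs
  have hcont : Continuous fun y' : EuclideanSpace ℝ {k // k ∈ Ω} =>
      y' ⟨(0 : Fin n → ℤ), h0⟩ :=
    (continuous_apply _).comp (PiLp.continuousLinearEquiv 2 ℝ _).continuous
  have hts_eq : ∀ q, ys q ⟨(0 : Fin n → ℤ), h0⟩ = ts q := by
    intro q
    have hx1 : xs q ⟨(0 : Fin n → ℤ), h0⟩ = 1 := coord_one_of_mem_hull h0 (hxs q)
    have : ys q ⟨(0 : Fin n → ℤ), h0⟩ = ts q * xs q ⟨(0 : Fin n → ℤ), h0⟩ := by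
      rw [hrep q]; rfl
    rw [this, hx1, mul_one]
  have htlim : Filter.Tendsto (fun j => ts (φ j)) Filter.atTop
      (nhds (y ⟨(0 : Fin n → ℤ), h0⟩)) := by
    have h1 := (hcont.tendsto y).comp (hlim.comp hφ.tendsto_atTop)
    have heq : (fun j => ts (φ j))
        = fun j => ys (φ j) ⟨(0 : Fin n → ℤ), h0⟩ := funext fun j => (hts_eq (φ j)).symm
    rw [heq]
    exact h1
  have hy : y = (y ⟨(0 : Fin n → ℤ), h0⟩) • x := by
    have h1 : Filter.Tendsto (fun j => ys (φ j)) Filter.atTop (nhds y) :=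
      hlim.comp hφ.tendsto_atTop
    have h2 : Filter.Tendsto (fun j => ys (φ j)) Filter.atTop
        (nhds ((y ⟨(0 : Fin n → ℤ), h0⟩) • x)) := by
      have heq : (fun j => ys (φ j)) = fun j => ts (φ j) • xs (φ j) :=
        funext fun j => hrep (φ j)
      rw [heq]
      exact htlim.smul hxlim
    exact tendsto_nhds_unique h1 h2
  exact ⟨y ⟨(0 : Fin n → ℤ), h0⟩, ge_of_tendsto' htlim fun j => hts (φ j), x, hxK, hy⟩

lemma uvec_mem_Ccone (ξ : Fin n → ℝ) (hξ : ξ ∈ Set.Icc (0 : Fin n → ℝ) 1) :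
    uvec Ω ξ ∈ Ccone Ω :=
  ⟨1, zero_le_one, uvec Ω ξ, subset_convexHull ℝ _ ⟨ξ, hξ, rfl⟩, (one_smul ℝ _).symm⟩

lemma nonempty_Ccone : ((Ccone Ω : Set (EuclideanSpace ℝ {k // k ∈ Ω}))).Nonempty :=
  ⟨uvec Ω 0, uvec_mem_Ccone 0 ⟨le_rfl, zero_le_one⟩⟩

lemma mem_Ccone_of_dual (h0 : (0 : Fin n → ℤ) ∈ Ω) {v : EuclideanSpace ℝ {k // k ∈ Ω}}
    (hv : ∀ c, (∀ y ∈ Ccone Ω, 0 ≤ ⟪y, c⟫) → 0 ≤ ⟪c, v⟫) : v ∈ Ccone Ω := by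
  by_contra hnot
  have hpt : (Ccone Ω).Pointed :=
    ⟨0, le_rfl, uvec Ω 0, subset_convexHull ℝ _ ⟨0, ⟨le_rfl, zero_le_one⟩, rfl⟩,
      (zero_smul ℝ _).symm⟩
  let K : ProperCone ℝ (EuclideanSpace ℝ {k // k ∈ Ω}) :=
    { toSubmodule := (Ccone Ω).toPointedCone hpt, isClosed' := isClosed_Ccone h0 }
  obtain ⟨c, hc, hcv⟩ := K.hyperplane_separation' (x₀ := v) hnot
  have h1 := hv c (fun y hy => hc y hy)
  rw [real_inner_comm] at hcv
  linarith


end Stmt5Aux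

open Stmt5Aux in
/-- every face of the cone of nonnegative trigonometric polynomials
(i.e., every intersection with a supporting hyperplane) is the set of polynomials of
the cone vanishing on a suitable compact set `S` (of representatives of points of the
torus `𝕋ⁿ`). -/
theorem stmt5 {n : ℕ} (Ω : Finset (Fin n → ℤ)) (h0 : (0 : Fin n → ℤ) ∈ Ω)
    (hsym : ∀ k ∈ Ω, -k ∈ Ω) (L : Set ({k // k ∈ Ω} → ℝ))
    (hface : ∃ f : ({k // k ∈ Ω} → ℝ) →ₗ[ℝ] ℝ, f ≠ 0 ∧
      (∀ p ∈ posTrigCone Ω, 0 ≤ f p) ∧ L = {p ∈ posTrigCone Ω | f p = 0}) :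
    ∃ S : Set (Fin n → ℝ), IsCompact S ∧ S ⊆ Set.Icc 0 1 ∧
      L = {p ∈ posTrigCone Ω | ∀ ξ ∈ S, trigEval Ω p ξ = 0} := by
  classical
  obtain ⟨f, hf0, hfnn, hL⟩ := hface
  set g : ({k // k ∈ Ω} → ℝ) →ₗ[ℝ] ℝ := f ∘ₗ symmize hsym with hg
  set v : EuclideanSpace ℝ {k // k ∈ Ω} := WithLp.toLp 2 (fun k => g fun j => if k = j then 1 else 0) with hv
  have hgrep : ∀ c : {k // k ∈ Ω} → ℝ, g c = ∑ k, c k * v k := by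
    intro c
    have h1 : g c = g (∑ k, c k • fun j => if k = j then (1:ℝ) else 0) := by
      rw [← pi_eq_sum_univ c]
    rw [h1, map_sum]
    refine Finset.sum_congr rfl fun k _ => ?_
    rw [map_smul, smul_eq_mul, hv]
  have hginner : ∀ c : EuclideanSpace ℝ {k // k ∈ Ω}, ⟪c, v⟫ = ∑ k, c k * v k := by
    intro c
    rw [PiLp.inner_apply]
    refine Finset.sum_congr rfl fun k _ => ?_
    rw [RCLike.inner_apply, starRingEnd_apply, star_trivial, mul_comm]
  -- v belongs to the cone generated by the evaluation vectors
  have hvmem : v ∈ Ccone Ω := by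
    refine mem_Ccone_of_dual h0 ?_
    intro c hc
    have hpos_mem : symmize hsym (fun k => c k) ∈ posTrigCone Ω := by
      refine ⟨symCoeff_symmize hsym _, fun ξ =>
        ⟨trigEval_im_eq_zero hsym (symCoeff_symmize hsym _) ξ, ?_⟩⟩
      rw [trigEval_re, sum_symmize_cos]
      have hfr : ∑ k, c k * Real.cos (theta Ω k ξ)
          = ⟪uvec Ω (fun i => Int.fract (ξ i)), c⟫ := by
        rw [inner_uvec]
        exact Finset.sum_congr rfl fun k _ => by rw [cos_theta_fract]
      rw [hfr]
      exact hc _ (uvec_mem_Ccone _ (mem_Icc_fract ξ))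
    have h2 : g (fun k => c k) = ∑ k, c k * v k := hgrep _
    rw [hginner c, ← h2]
    exact hfnn _ hpos_mem
  obtain ⟨t, ht, x, hxhull, hvx⟩ := hvmem
  obtain ⟨w, z, hw, hw1, hz, hrep⟩ := pad_convexHull hxhull
  simp only [Dset, Set.mem_image] at hz
  choose ξs hξs hzeq using hz
  set lam := fun j => t * w j with hlam
  have hlam_nonneg : ∀ j, 0 ≤ lam j := fun j => mul_nonneg ht (hw j)
  -- the key representation of f on the cone
  have key : ∀ p ∈ posTrigCone Ω, f p = ∑ j, lam j * (trigEval Ω p (ξs j)).re := by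
    intro p hp
    have h1 : f p = g p := by
      show f p = f (symmize hsym p)
      rw [symmize_of_symCoeff hsym hp.1]
    have h2 : (∑ k, p k * v k) = ⟪v, (WithLp.toLp 2 (fun k => p k) : EuclideanSpace ℝ {k // k ∈ Ω})⟫ := by
      rw [real_inner_comm, hginner]
    have h3 : ⟪v, (WithLp.toLp 2 (fun k => p k) : EuclideanSpace ℝ {k // k ∈ Ω})⟫
        = t * ∑ j, w j * (trigEval Ω p (ξs j)).re := by
      rw [hvx, real_inner_smul_left]
      congr 1
      rw [← hrep, sum_inner]
      refine Finset.sum_congr rfl fun j _ => ?_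
      rw [real_inner_smul_left]
      congr 1
      rw [← hzeq j, inner_uvec, trigEval_re]
    rw [h1, hgrep p, h2, h3, Finset.mul_sum]
    exact Finset.sum_congr rfl fun j _ => by rw [hlam]; ring
  set S : Set (Fin n → ℝ) := ξs '' {j | 0 < lam j} with hS
  have hkey2 : ∀ p ∈ posTrigCone Ω, (f p = 0 ↔ ∀ ξ' ∈ S, trigEval Ω p ξ' = 0) := by
    intro p hp
    have hterm_nonneg : ∀ j ∈ Finset.univ, 0 ≤ lam j * (trigEval Ω p (ξs j)).re :=
      fun j _ => mul_nonneg (hlam_nonneg j) (hp.2 (ξs j)).2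
    constructor
    · intro hfp ξ' hξ'
      obtain ⟨j, hj, rfl⟩ := hξ'
      have hsum0 : ∑ j, lam j * (trigEval Ω p (ξs j)).re = 0 := by
        rw [← key p hp]; exact hfp
      have hterm := (Finset.sum_eq_zero_iff_of_nonneg hterm_nonneg).1 hsum0 j (Finset.mem_univ j)
      have hre : (trigEval Ω p (ξs j)).re = 0 := by
        rcases mul_eq_zero.1 hterm with h | h
        · exact absurd h hj.ne'
        · exact h
      exact Complex.ext (by simpa using hre) (by simpa using (hp.2 (ξs j)).1)
    · intro hvan
      rw [key p hp]
      refine Finset.sum_eq_zero fun j _ => ?_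
      rcases eq_or_lt_of_le (hlam_nonneg j) with h | h
      · rw [← h, zero_mul]
      · have hz0 := hvan (ξs j) ⟨j, h, rfl⟩
        rw [hz0]
        simp
  refine ⟨S, ?_, ?_, ?_⟩
  · exact ((Set.toFinite _).image _).isCompact
  · rintro _ ⟨j, _, rfl⟩
    exact hξs j
  · rw [hL]
    ext p
    simp only [Set.mem_setOf_eq]
    exact ⟨fun ⟨hp, hfp⟩ => ⟨hp, (hkey2 p hp).1 hfp⟩,
      fun ⟨hp, hvan⟩ => ⟨hp, (hkey2 p hp).2 hvan⟩⟩
end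

section
/- For every linear subspace J ⊆ ℝ^n there exists a unique minimal (by inclusion) rational subspace L containing J; moreover, the union of the translates J + k over k ∈ L ∩ ℤ^n is dense in L. -/
/-- The real vector associated with an integer vector. -/
def intVec {n : ℕ} (k : Fin n → ℤ) : Fin n → ℝ := fun i => (k i : ℝ)

/-- A subspace of `ℝⁿ` is rational if it is spanned by finitely many integer vectors. -/
def IsRationalSubspace {n : ℕ} (L : Submodule ℝ (Fin n → ℝ)) : Prop :=
  ∃ T : Finset (Fin n → ℤ), L = Submodule.span ℝ (intVec '' ↑T)

open Submodule Module

lemma intVec_def {n : ℕ} (k : Fin n → ℤ) : intVec k = fun i => ((k i : ℤ) : ℝ) := rfl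

noncomputable def ratCastLM {n : ℕ} : (Fin n → ℚ) →ₗ[ℚ] (Fin n → ℝ) where
  toFun x := fun i => (x i : ℝ)
  map_add' x y := by funext i; simp
  map_smul' c x := by funext i; simp [Rat.smul_def]

@[simp] lemma ratCastLM_apply {n : ℕ} (x : Fin n → ℚ) (i : Fin n) :
    ratCastLM x i = ((x i : ℚ) : ℝ) := rfl

noncomputable def EQ {n : ℕ} (W : Submodule ℚ (Fin n → ℚ)) : Submodule ℝ (Fin n → ℝ) :=
  span ℝ (ratCastLM '' (W : Set (Fin n → ℚ)))

lemma span_img_span {n : ℕ} (S : Set (Fin n → ℚ)) :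
    span ℝ (ratCastLM '' ((span ℚ S : Submodule ℚ (Fin n → ℚ)) : Set (Fin n → ℚ)))
      = span ℝ (ratCastLM '' S) := by
  have h : (ratCastLM '' ((span ℚ S : Submodule ℚ (Fin n → ℚ)) : Set (Fin n → ℚ)))
      = ((span ℚ S).map ratCastLM : Set (Fin n → ℝ)) := by
    simp [Submodule.map_coe]
  rw [h, Submodule.map_span]
  exact Submodule.span_span_of_tower ℚ ℝ _

lemma EQ_span {n : ℕ} (S : Set (Fin n → ℚ)) : EQ (span ℚ S) = span ℝ (ratCastLM '' S) :=
  span_img_span S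

lemma EQ_mono {n : ℕ} {W W' : Submodule ℚ (Fin n → ℚ)} (h : W ≤ W') : EQ W ≤ EQ W' :=
  span_mono (Set.image_mono h)

lemma li_ratCast {n : ℕ} (s : Set (Fin n → ℚ))
    (hs : LinearIndependent ℚ ((↑) : s → (Fin n → ℚ))) :
    LinearIndependent ℝ (fun x : s => ratCastLM (x : Fin n → ℚ)) := by
  classical
  set u : Set (Fin n → ℚ) := (show LinearIndepOn ℚ id s from hs).extend (Set.subset_univ s) with hu
  let bu : Basis u ℚ (Fin n → ℚ) := Basis.extend (show LinearIndepOn ℚ id s from hs)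
  haveI : Fintype u := FiniteDimensional.fintypeBasisIndex bu
  let e : u ≃ Fin n := bu.indexEquiv (Pi.basisFun ℚ (Fin n))
  let bu' : Basis (Fin n) ℚ (Fin n → ℚ) := bu.reindex e
  let A : Matrix (Fin n) (Fin n) ℚ := Matrix.of (fun i => bu' i)
  have hA : IsUnit A := by
    rw [← Matrix.linearIndependent_rows_iff_isUnit]
    exact bu'.linearIndependent
  have hA' : IsUnit (A.map (Rat.cast : ℚ → ℝ)) := by
    rw [Matrix.isUnit_iff_isUnit_det] at hA ⊢
    rw [show (A.map (Rat.cast : ℚ → ℝ)) = (Rat.castHom ℝ).mapMatrix A from rfl,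
      ← RingHom.map_det]
    exact hA.map (Rat.castHom ℝ)
  have hrows : LinearIndependent ℝ (fun i => (A.map (Rat.cast : ℚ → ℝ)) i) :=
    Matrix.linearIndependent_rows_iff_isUnit.mpr hA'
  have hrows' : LinearIndependent ℝ (fun i : Fin n => ratCastLM (bu' i)) := by
    convert hrows using 1
    rfl
  have hufam : LinearIndependent ℝ (fun x : u => ratCastLM ((bu x : Fin n → ℚ))) := by
    have h2 := hrows'.comp e (e.injective)
    convert h2 using 1
    funext x
    simp [bu', Basis.reindex_apply]
  have hufam' : LinearIndependent ℝ (fun x : u => ratCastLM (x : Fin n → ℚ)) := by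
    have : (fun x : u => ratCastLM ((bu x : Fin n → ℚ)))
        = fun x : u => ratCastLM (x : Fin n → ℚ) := by
      funext x; congr 1; rw [show bu = Basis.extend (show LinearIndepOn ℚ id s from hs) from rfl, Basis.coe_extend]
    rwa [this] at hufam
  have hincl : s ⊆ u := (show LinearIndepOn ℚ id s from hs).subset_extend _
  have h3 := hufam'.comp (Set.inclusion hincl) (Set.inclusion_injective hincl)
  convert h3 using 1
  rfl

lemma finrank_EQ {n : ℕ} (W : Submodule ℚ (Fin n → ℚ)) :
    finrank ℝ (EQ W) = finrank ℚ W := by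
  classical
  obtain ⟨b, hbW, hbspan, hbli⟩ := exists_linearIndependent ℚ (W : Set (Fin n → ℚ))
  have hfin : b.Finite := hbli.setFinite
  haveI := hfin.fintype
  have hWspan : span ℚ b = W := by rw [hbspan, Submodule.span_eq]
  have h1 : EQ W = span ℝ (ratCastLM '' b) := by rw [← hWspan, EQ_span]
  have hli := li_ratCast b hbli
  have himg : ratCastLM '' b = Set.range (fun x : b => ratCastLM (x : Fin n → ℚ)) := by
    rw [← Set.image_eq_range]
  rw [h1, himg, finrank_span_eq_card hli, ← hWspan, finrank_span_set_eq_card hbli,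
    Set.toFinset_card]

lemma rational_iff {n : ℕ} (L : Submodule ℝ (Fin n → ℝ)) :
    IsRationalSubspace L ↔ ∃ W : Submodule ℚ (Fin n → ℚ), L = EQ W := by
  constructor
  · rintro ⟨T, rfl⟩
    refine ⟨span ℚ ((fun k : Fin n → ℤ => fun i => (k i : ℚ)) '' ↑T), ?_⟩
    rw [EQ_span, ← Set.image_comp]
    rfl
  · rintro ⟨W, rfl⟩
    classical
    obtain ⟨b, hbW, hbspan, hbli⟩ := exists_linearIndependent ℚ (W : Set (Fin n → ℚ))
    have hfin : b.Finite := hbli.setFinite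
    haveI := hfin.fintype
    have hWspan : span ℚ b = W := by rw [hbspan, Submodule.span_eq]
    have h1 : EQ W = span ℝ (ratCastLM '' b) := by rw [← hWspan, EQ_span]
    let N : (Fin n → ℚ) → ℕ := fun x => ∏ i, (x i).den
    have hNpos : ∀ x, 0 < N x := fun x => Finset.prod_pos (fun i _ => (x i).den_pos)
    let kv : (Fin n → ℚ) → (Fin n → ℤ) :=
      fun x i => (x i).num * ∏ i' ∈ Finset.univ.erase i, ((x i').den : ℤ)
    have hkv : ∀ x : Fin n → ℚ, intVec (kv x) = (N x : ℝ) • ratCastLM x := by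
      intro x; funext i
      show ((kv x i : ℤ) : ℝ) = (N x : ℝ) * (x i : ℝ)
      have hq : ((x i).num : ℚ) = x i * (x i).den :=
        ((div_eq_iff (by exact_mod_cast (x i).den_ne_zero : ((x i).den : ℚ) ≠ 0)).mp
          (Rat.num_div_den (x i)))
      have hq' : (((x i).num : ℤ) : ℝ) = (x i : ℝ) * ((x i).den : ℝ) := by
        have := congrArg (fun q : ℚ => (q : ℝ)) hq
        push_cast at this
        exact this
      simp only [kv, N]
      push_cast
      rw [hq', ← Finset.mul_prod_erase Finset.univ (fun i' => ((x i').den : ℝ))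
        (Finset.mem_univ i)]
      ring
    let T : Finset (Fin n → ℤ) := Finset.univ.image (fun x : b => kv x.val)
    refine ⟨T, ?_⟩
    rw [h1]
    apply le_antisymm
    · rw [Submodule.span_le]
      rintro - ⟨x, hx, rfl⟩
      have hxk : ratCastLM x = ((N x : ℝ))⁻¹ • intVec (kv x) := by
        rw [hkv x, smul_smul, inv_mul_cancel₀ (by exact_mod_cast (hNpos x).ne'), one_smul]
      rw [hxk]
      refine Submodule.smul_mem _ _ (Submodule.subset_span ?_)
      exact ⟨kv x, by simp [T]; exact ⟨x, hx, rfl⟩, rfl⟩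
    · rw [Submodule.span_le]
      rintro - ⟨k, hk, rfl⟩
      simp only [T, Finset.coe_image, Finset.coe_univ, Set.image_univ, Set.mem_range] at hk
      obtain ⟨⟨x, hx⟩, rfl⟩ := hk
      rw [hkv x]
      exact Submodule.smul_mem _ _ (Submodule.subset_span ⟨x, hx, rfl⟩)

lemma rational_top {n : ℕ} : IsRationalSubspace (⊤ : Submodule ℝ (Fin n → ℝ)) := by
  rw [rational_iff]
  refine ⟨⊤, le_antisymm ?_ le_top⟩
  rw [← (Pi.basisFun ℝ (Fin n)).span_eq, Submodule.span_le]
  rintro - ⟨i, rfl⟩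
  apply Submodule.subset_span
  refine ⟨Pi.single i 1, trivial, ?_⟩
  funext j
  rw [Pi.basisFun_apply]
  by_cases h : i = j <;> simp [Pi.single_apply, h]

lemma rational_inf {n : ℕ} {L₁ L₂ : Submodule ℝ (Fin n → ℝ)}
    (h₁ : IsRationalSubspace L₁) (h₂ : IsRationalSubspace L₂) :
    IsRationalSubspace (L₁ ⊓ L₂) := by
  rw [rational_iff] at h₁ h₂ ⊢
  obtain ⟨W₁, rfl⟩ := h₁
  obtain ⟨W₂, rfl⟩ := h₂
  refine ⟨W₁ ⊓ W₂, ?_⟩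
  have hsup : EQ (W₁ ⊔ W₂) = EQ W₁ ⊔ EQ W₂ := by
    have : (W₁ ⊔ W₂ : Submodule ℚ (Fin n → ℚ)) = span ℚ ((W₁ : Set _) ∪ (W₂ : Set _)) := by
      rw [Submodule.span_union, Submodule.span_eq, Submodule.span_eq]
    rw [this, EQ_span, Set.image_union, Submodule.span_union]
    rfl
  have e1 := Submodule.finrank_sup_add_finrank_inf_eq W₁ W₂
  have e2 := Submodule.finrank_sup_add_finrank_inf_eq (EQ W₁) (EQ W₂)
  have hfr : finrank ℝ ↥(EQ W₁ ⊓ EQ W₂) = finrank ℝ (EQ (W₁ ⊓ W₂)) := by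
    have := finrank_EQ (W₁ ⊔ W₂)
    rw [hsup] at this
    have h3 := finrank_EQ W₁; have h4 := finrank_EQ W₂; have h5 := finrank_EQ (W₁ ⊓ W₂)
    omega
  refine (Submodule.eq_of_le_of_finrank_le (le_inf (EQ_mono inf_le_left) (EQ_mono inf_le_right)) (le_of_eq hfr)).symm

lemma line_lemma {n : ℕ} (G : AddSubgroup (Fin n → ℝ)) (hGc : IsClosed (G : Set (Fin n → ℝ)))
    (h : ¬ ∃ ε > (0:ℝ), ∀ g ∈ G, ‖g‖ < ε → g = 0) :
    ∃ u, u ∈ G ∧ u ≠ 0 ∧ ∀ t : ℝ, t • u ∈ G := by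
  push_neg at h
  have hseq : ∀ k : ℕ, ∃ g, g ∈ G ∧ ‖g‖ < 1/(k+1) ∧ g ≠ 0 := by
    intro k
    obtain ⟨g, hgG, hgn, hg0⟩ := h (1/(k+1)) (by positivity)
    exact ⟨g, hgG, hgn, hg0⟩
  choose g hgG hgn hg0 using hseq
  set w : ℕ → (Fin n → ℝ) := fun k => ‖g k‖⁻¹ • g k with hw
  have hgnorm0 : ∀ k, ‖g k‖ ≠ 0 := fun k => norm_ne_zero_iff.mpr (hg0 k)
  have hwsph : ∀ k, w k ∈ Metric.sphere (0 : Fin n → ℝ) 1 := by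
    intro k
    simp [hw, norm_smul, inv_mul_cancel₀ (hgnorm0 k)]
  obtain ⟨u, husph, φ, hφ, hconv⟩ := (isCompact_sphere (0 : Fin n → ℝ) 1).tendsto_subseq hwsph
  have hu0 : u ≠ 0 := by
    intro hu
    rw [hu] at husph
    simp at husph
  have hline : ∀ t : ℝ, t • u ∈ G := by
    intro t
    have hnormlim : Filter.Tendsto (fun j => ‖g (φ j)‖) Filter.atTop (nhds 0) := by
      have hb : ∀ j : ℕ, ‖g (φ j)‖ ≤ 1/(j+1) := by
        intro j
        refine le_trans (le_of_lt (hgn (φ j))) ?_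
        have h0 : (j:ℝ) + 1 ≤ (φ j : ℝ) + 1 := by
          have hle : (j:ℝ) ≤ (φ j : ℝ) := by exact_mod_cast hφ.le_apply
          linarith
        exact one_div_le_one_div_of_le (by positivity) h0
      refine squeeze_zero (fun j => norm_nonneg _) hb ?_
      exact tendsto_one_div_add_atTop_nhds_zero_nat
    set a : ℕ → ℝ := fun j => (round (t * ‖g (φ j)‖⁻¹) : ℤ) * ‖g (φ j)‖ with ha
    have halim : Filter.Tendsto a Filter.atTop (nhds t) := by
      have hdiff : ∀ j, |a j - t| ≤ ‖g (φ j)‖ / 2 := by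
        intro j
        have h1 : a j - t = (↑(round (t * ‖g (φ j)‖⁻¹)) - t * ‖g (φ j)‖⁻¹) * ‖g (φ j)‖ := by
          simp only [ha]
          rw [sub_mul]
          congr 1
          rw [mul_assoc, inv_mul_cancel₀ (hgnorm0 _), mul_one]
        rw [h1, abs_mul, abs_of_nonneg (norm_nonneg _), abs_sub_comm]
        have := abs_sub_round (t * ‖g (φ j)‖⁻¹)
        nlinarith [norm_nonneg (g (φ j))]
      have h2 : Filter.Tendsto (fun j => ‖g (φ j)‖ / 2) Filter.atTop (nhds 0) := by
        simpa using hnormlim.div_const 2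
      have h3 : Filter.Tendsto (fun j => a j - t) Filter.atTop (nhds 0) :=
        squeeze_zero_norm (fun j => by rw [Real.norm_eq_abs]; exact hdiff j) h2
      have h4 := h3.add_const t
      simpa using h4
    have hgw : ∀ j, a j • w (φ j) = (round (t * ‖g (φ j)‖⁻¹) : ℤ) • g (φ j) := by
      intro j
      rw [← Int.cast_smul_eq_zsmul ℝ]
      simp only [hw, ha, smul_smul]
      congr 1
      rw [mul_assoc, mul_inv_cancel₀ (hgnorm0 _), mul_one]
    have hlim : Filter.Tendsto (fun j => a j • w (φ j)) Filter.atTop (nhds (t • u)) :=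
      halim.smul hconv
    have hmem : ∀ j, a j • w (φ j) ∈ G := by
      intro j
      rw [hgw j]
      exact AddSubgroup.zsmul_mem G (hgG (φ j)) _
    exact hGc.mem_of_tendsto hlim (Filter.Eventually.of_forall hmem)
  exact ⟨u, by simpa using hline 1, hu0, hline⟩

-- structure lemma
lemma structure_lemma {n : ℕ} : ∀ (d : ℕ) (M : Submodule ℝ (Fin n → ℝ))
    (G : AddSubgroup (Fin n → ℝ)), IsClosed (G : Set (Fin n → ℝ)) →
    (G : Set (Fin n → ℝ)) ⊆ M → finrank ℝ M ≤ d →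
    ∃ (V : Submodule ℝ (Fin n → ℝ)) (ε : ℝ), 0 < ε ∧ (V : Set (Fin n → ℝ)) ⊆ G ∧
      ∀ g ∈ G, ‖g‖ < ε → g ∈ V := by
  intro d
  induction d with
  | zero =>
    intro M G hGc hGM hrk
    refine ⟨⊥, 1, one_pos, ?_, ?_⟩
    · intro x hx
      rw [SetLike.mem_coe, Submodule.mem_bot] at hx
      rw [hx]
      exact AddSubgroup.zero_mem G
    · intro gg hg _
      have hM : M = ⊥ := Submodule.finrank_eq_zero.mp (Nat.le_zero.mp hrk)
      have := hGM hg
      rw [SetLike.mem_coe, hM, Submodule.mem_bot] at this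
      simp [this]
  | succ d ih =>
    intro M G hGc hGM hrk
    by_cases hdisc : ∃ ε > (0:ℝ), ∀ g ∈ G, ‖g‖ < ε → g = 0
    · obtain ⟨ε, hε, hdisc⟩ := hdisc
      refine ⟨⊥, ε, hε, ?_, ?_⟩
      · intro x hx
        rw [SetLike.mem_coe, Submodule.mem_bot] at hx
        rw [hx]; exact AddSubgroup.zero_mem G
      · intro gg hg hn
        rw [Submodule.mem_bot]
        exact hdisc gg hg hn
    · obtain ⟨u, huG, hu0, hline⟩ := line_lemma G hGc hdisc
      obtain ⟨f₀, hf₀n, hf₀u⟩ := exists_dual_vector ℝ u (norm_ne_zero_iff.mpr hu0)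
      set f : (Fin n → ℝ) →L[ℝ] ℝ := (‖u‖⁻¹ : ℝ) • f₀ with hf
      have hfu : f u = 1 := by
        rw [hf]
        simp only [ContinuousLinearMap.coe_smul', Pi.smul_apply, hf₀u]
        simp [smul_eq_mul]
        rw [inv_mul_cancel₀ (norm_ne_zero_iff.mpr hu0)]
      set M' := M ⊓ LinearMap.ker (f : (Fin n → ℝ) →ₗ[ℝ] ℝ) with hM'
      set G' : AddSubgroup (Fin n → ℝ) :=
        G ⊓ (LinearMap.ker (f : (Fin n → ℝ) →ₗ[ℝ] ℝ)).toAddSubgroup with hG'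
      have hG'c : IsClosed (G' : Set (Fin n → ℝ)) := by
        have : (G' : Set (Fin n → ℝ)) = (G : Set _) ∩ (f ⁻¹' {0}) := rfl
        rw [this]
        exact hGc.inter (isClosed_singleton.preimage f.continuous)
      have hG'M' : (G' : Set (Fin n → ℝ)) ⊆ M' := by
        rintro x ⟨hxG, hxk⟩
        exact ⟨hGM hxG, hxk⟩
      have hM'rk : finrank ℝ M' ≤ d := by
        have hlt : M' < M := by
          refine lt_of_le_of_ne inf_le_left ?_
          intro he
          have hu1 : u ∈ M' := by rw [he]; exact hGM huG
          have h5 : (↑f : (Fin n → ℝ) →ₗ[ℝ] ℝ) u = 0 :=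
            LinearMap.mem_ker.mp (Submodule.mem_inf.mp hu1).2
          rw [show (↑f : (Fin n → ℝ) →ₗ[ℝ] ℝ) u = f u from rfl, hfu] at h5
          norm_num at h5
        have := Submodule.finrank_lt_finrank_of_lt hlt
        omega
      obtain ⟨V', ε', hε', hV'G', hdisc'⟩ := ih M' G' hG'c hG'M' hM'rk
      refine ⟨(span ℝ {u}) ⊔ V', ε' / (1 + ‖f‖ * ‖u‖), ?_, ?_, ?_⟩
      · positivity
      · intro x hx
        rw [SetLike.mem_coe, Submodule.mem_sup] at hx
        obtain ⟨y, hy, z, hz, rfl⟩ := hx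
        obtain ⟨t, rfl⟩ := Submodule.mem_span_singleton.mp hy
        exact AddSubgroup.add_mem G (hline t) (hV'G' hz).1
      · intro gg hg hn
        set p := gg - f gg • u with hp
        have hpG : p ∈ G := AddSubgroup.sub_mem G hg (hline (f gg))
        have hpk : f p = 0 := by
          rw [hp]
          simp [map_sub, hfu, smul_eq_mul]
        have hpG' : p ∈ G' := AddSubgroup.mem_inf.mpr
          ⟨hpG, (Submodule.mem_toAddSubgroup _).mpr (LinearMap.mem_ker.mpr (by exact hpk))⟩
        have hpn : ‖p‖ < ε' := by
          have h1 : ‖p‖ ≤ ‖gg‖ + ‖f gg‖ * ‖u‖ := by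
            rw [hp]
            refine le_trans (norm_sub_le _ _) ?_
            rw [norm_smul]
          have h2 : ‖f gg‖ ≤ ‖f‖ * ‖gg‖ := f.le_opNorm gg
          have h3 : ‖p‖ ≤ ‖gg‖ * (1 + ‖f‖ * ‖u‖) := by
            nlinarith [norm_nonneg gg, norm_nonneg u, norm_nonneg (f gg), norm_nonneg f]
          have h4 : (0:ℝ) < 1 + ‖f‖ * ‖u‖ := by positivity
          calc ‖p‖ ≤ ‖gg‖ * (1 + ‖f‖ * ‖u‖) := h3
            _ < (ε' / (1 + ‖f‖ * ‖u‖)) * (1 + ‖f‖ * ‖u‖) := by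
                apply mul_lt_mul_of_pos_right hn h4
            _ = ε' := by field_simp
        have hpV' : p ∈ V' := hdisc' p hpG' hpn
        rw [Submodule.mem_sup]
        exact ⟨f gg • u, Submodule.smul_mem _ _ (Submodule.mem_span_singleton_self u),
          p, hpV', by rw [hp]; ring⟩

lemma intVec_add {n : ℕ} (k l : Fin n → ℤ) : intVec (k + l) = intVec k + intVec l := by
  simp only [intVec_def]; funext i; simp only [Pi.add_apply]; push_cast; ring
lemma intVec_neg {n : ℕ} (k : Fin n → ℤ) : intVec (-k) = - intVec k := by
  simp only [intVec_def]; funext i; simp only [Pi.neg_apply]; push_cast; ring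
lemma intVec_zero {n : ℕ} : intVec (0 : Fin n → ℤ) = 0 := by
  simp only [intVec_def]; funext i; simp only [Pi.zero_apply]; push_cast; ring

set_option maxHeartbeats 1600000 in
set_option synthInstance.maxHeartbeats 400000 in
/-- every subspace `J ⊆ ℝⁿ` has a unique minimal rational subspace `L`
containing it, and the union of translates `J + k`, `k ∈ L ∩ ℤⁿ`, is dense in `L`. -/
theorem stmt7 {n : ℕ} (J : Submodule ℝ (Fin n → ℝ)) :
    ∃ L : Submodule ℝ (Fin n → ℝ),
      (IsRationalSubspace L ∧ J ≤ L ∧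
        ∀ L' : Submodule ℝ (Fin n → ℝ), IsRationalSubspace L' → J ≤ L' → L ≤ L') ∧
      (∀ L' : Submodule ℝ (Fin n → ℝ),
        (IsRationalSubspace L' ∧ J ≤ L' ∧
          ∀ L'' : Submodule ℝ (Fin n → ℝ), IsRationalSubspace L'' → J ≤ L'' → L' ≤ L'') →
        L' = L) ∧
      (L : Set (Fin n → ℝ)) ⊆
        closure (⋃ (k : Fin n → ℤ) (_ : intVec k ∈ L), (fun x => x + intVec k) '' (J : Set (Fin n → ℝ))) := by
  classical
  set DD : Set ℕ := {d : ℕ | ∃ L' : Submodule ℝ (Fin n → ℝ),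
      IsRationalSubspace L' ∧ J ≤ L' ∧ finrank ℝ L' = d} with hDD
  have hne : DD.Nonempty := ⟨finrank ℝ (⊤ : Submodule ℝ (Fin n → ℝ)), ⊤, rational_top, le_top, rfl⟩
  obtain ⟨L, hLrat, hJL, hLd⟩ := Nat.sInf_mem hne
  have hmin : ∀ L' : Submodule ℝ (Fin n → ℝ), IsRationalSubspace L' → J ≤ L' → L ≤ L' := by
    intro L' hL'rat hJL'
    have hinf : IsRationalSubspace (L ⊓ L') := rational_inf hLrat hL'rat
    have hmem : finrank ℝ ↥(L ⊓ L') ∈ DD := ⟨L ⊓ L', hinf, le_inf hJL hJL', rfl⟩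
    have hge : sInf DD ≤ finrank ℝ ↥(L ⊓ L') := Nat.sInf_le hmem
    have heq : L ⊓ L' = L :=
      Submodule.eq_of_le_of_finrank_le inf_le_left (by rw [hLd]; exact hge)
    exact inf_eq_left.mp heq
  refine ⟨L, ⟨hLrat, hJL, hmin⟩, ?_, ?_⟩
  · rintro L' ⟨hrat', hJ', hmin'⟩
    exact le_antisymm (hmin' L hLrat hJL) (hmin L' hrat' hJ')
  -- DENSITY
  set Λ : AddSubgroup (Fin n → ℝ) :=
    { carrier := {x | x ∈ L ∧ ∃ k : Fin n → ℤ, intVec k = x}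
      zero_mem' := ⟨L.zero_mem, 0, intVec_zero⟩
      add_mem' := by
        rintro x y ⟨hx, kx, rfl⟩ ⟨hy, ky, rfl⟩
        exact ⟨L.add_mem hx hy, kx + ky, intVec_add kx ky⟩
      neg_mem' := by
        rintro x ⟨hx, k, rfl⟩
        exact ⟨L.neg_mem hx, -k, intVec_neg k⟩ } with hΛdef
  have hΛmem : ∀ x, x ∈ Λ ↔ x ∈ L ∧ ∃ k : Fin n → ℤ, intVec k = x := fun x => Iff.rfl
  set H : AddSubgroup (Fin n → ℝ) := J.toAddSubgroup ⊔ Λ with hHdef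
  set G : AddSubgroup (Fin n → ℝ) := H.topologicalClosure with hGdef
  have hGcoe : (G : Set (Fin n → ℝ)) = closure (H : Set (Fin n → ℝ)) := rfl
  have hGc : IsClosed (G : Set (Fin n → ℝ)) := by
    rw [hGcoe]; exact isClosed_closure
  have hHL : (H : Set (Fin n → ℝ)) ⊆ (L : Set (Fin n → ℝ)) := by
    intro x hx
    obtain ⟨y, hy, z, hz, rfl⟩ := AddSubgroup.mem_sup.mp hx
    exact L.add_mem (hJL hy) ((hΛmem z).mp hz).1
  have hGL : (G : Set (Fin n → ℝ)) ⊆ (L : Set (Fin n → ℝ)) := by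
    rw [hGcoe]
    exact closure_minimal hHL (Submodule.closed_of_finiteDimensional L)
  obtain ⟨V, ε, hε, hVG, hdiscV⟩ := structure_lemma (finrank ℝ L) L G hGc hGL le_rfl
  have hHG : H ≤ G := AddSubgroup.le_topologicalClosure H
  have hΛG : (Λ : Set (Fin n → ℝ)) ⊆ (G : Set (Fin n → ℝ)) :=
    fun x hx => hHG (le_sup_right (α := AddSubgroup (Fin n → ℝ)) (a := J.toAddSubgroup) hx)
  have hJG : ∀ x ∈ J, x ∈ G :=
    fun x hx => hHG (le_sup_left (α := AddSubgroup (Fin n → ℝ)) (b := Λ) hx)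
  have hVL : V ≤ L := fun x hx => hGL (hVG hx)
  -- J ≤ V
  have hJV : J ≤ V := by
    intro j hj
    rcases eq_or_ne j 0 with rfl | hj0
    · exact V.zero_mem
    · have hjn : 0 < ‖j‖ := norm_pos_iff.mpr hj0
      set t : ℝ := ε / (2 * ‖j‖) with ht
      have ht0 : 0 < t := by positivity
      have h1 : t • j ∈ G := hJG _ (J.smul_mem t hj)
      have h2 : ‖t • j‖ < ε := by
        have he : t * ‖j‖ = ε / 2 := by
          rw [ht]; field_simp
        rw [norm_smul, Real.norm_eq_abs, abs_of_pos ht0, he]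
        linarith
      have h3 : t • j ∈ V := hdiscV _ h1 h2
      have h4 := V.smul_mem t⁻¹ h3
      rwa [smul_smul, inv_mul_cancel₀ ht0.ne', one_smul] at h4
  -- span of Λ is L
  have hspanΛ : span ℝ (Λ : Set (Fin n → ℝ)) = L := by
    obtain ⟨T, hT⟩ := hLrat
    apply le_antisymm
    · exact Submodule.span_le.mpr (fun x hx => ((hΛmem x).mp hx).1)
    · conv_lhs => rw [hT]
      apply Submodule.span_le.mpr
      rintro x ⟨k, hk, rfl⟩
      exact Submodule.subset_span ((hΛmem _).mpr ⟨by rw [hT]; exact Submodule.subset_span ⟨k, hk, rfl⟩, k, rfl⟩)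
  -- projection along V
  obtain ⟨C, hC⟩ := Submodule.exists_isCompl V
  set P : (Fin n → ℝ) →ₗ[ℝ] (Fin n → ℝ) := C.subtype.comp (C.projectionOnto V hC.symm) with hPdef
  have hsub : ∀ x, x - P x ∈ V := by
    intro x
    have h := Submodule.projection_add_projection_eq_self hC.symm x
    have h2 : x - P x = ((V.projectionOnto C hC.symm.symm) x : Fin n → ℝ) := by
      simp [hPdef]; rw [eq_sub_of_add_eq h, sub_sub_cancel]
    rw [h2]; exact Submodule.coe_mem _
  have hPv : ∀ x ∈ V, P x = 0 := by
    intro x hx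
    have := Submodule.linearProjOfIsCompl_apply_right hC.symm ⟨x, hx⟩
    simp only [hPdef, LinearMap.comp_apply]
    rw [show ((⟨x, hx⟩ : V) : Fin n → ℝ) = x from rfl] at this
    rw [this, map_zero]
  have hkerP : ∀ x, P x = 0 → x ∈ V := by
    intro x h0
    have := hsub x
    rwa [h0, sub_zero] at this
  have hrangeC : ∀ x, P x ∈ C := fun x => Submodule.coe_mem _
  set S : Submodule ℝ (Fin n → ℝ) := L.map P with hSdef
  -- rank of S
  have h4 : finrank ℝ ↥S + finrank ℝ ↥V = finrank ℝ ↥L := by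
    set φ : ↥L →ₗ[ℝ] (Fin n → ℝ) := P.comp L.subtype with hφdef
    have hrange : LinearMap.range φ = S := by
      rw [hφdef, LinearMap.range_comp, Submodule.range_subtype]
    have hker : LinearMap.ker φ = V.comap L.subtype := by
      ext x
      simp only [LinearMap.mem_ker, Submodule.mem_comap, hφdef, LinearMap.comp_apply]
      constructor
      · exact fun h => hkerP _ h
      · exact fun h => hPv _ h
    have h5 := LinearMap.finrank_range_add_finrank_ker φ
    rw [hrange, hker] at h5
    have h9 : finrank ℝ ↥(V.comap L.subtype) = finrank ℝ ↥V :=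
      LinearEquiv.finrank_eq (R := ℝ) (Submodule.comapSubtypeEquivOfLe hVL)
    rw [h9] at h5
    exact h5
  -- the discrete subgroup
  set DZ : Submodule ℤ (Fin n → ℝ) :=
    AddSubgroup.toIntSubmodule (Λ.map P.toAddMonoidHom) with hDZdef
  have hDZmem : ∀ x, x ∈ DZ ↔ ∃ y ∈ Λ, P y = x := by
    intro x
    constructor
    · intro h
      obtain ⟨y, hy, he⟩ := AddSubgroup.mem_map.mp h
      exact ⟨y, hy, he⟩
    · rintro ⟨y, hy, he⟩
      exact AddSubgroup.mem_map.mpr ⟨y, hy, he⟩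
  have hDZS : ∀ x ∈ DZ, x ∈ S := by
    intro x hx
    obtain ⟨y, hy, rfl⟩ := (hDZmem x).mp hx
    exact Submodule.mem_map.mpr ⟨y, ((hΛmem y).mp hy).1, rfl⟩
  -- discreteness of DZ
  have hD : ∀ x ∈ DZ, ‖x‖ < ε → x = 0 := by
    intro x hx hlt
    obtain ⟨lam, hlam, rfl⟩ := (hDZmem x).mp hx
    have h1 : P lam ∈ G := by
      have h2 : lam - P lam ∈ G := hVG (hsub lam)
      have h3 := AddSubgroup.sub_mem G (hΛG hlam) h2
      simpa using h3
    have h3 : P lam ∈ V := hdiscV _ h1 hlt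
    exact (Submodule.disjoint_def.mp hC.symm.disjoint) _ (hrangeC lam) h3
  -- DS in ambient S
  set DS : Submodule ℤ ↥S := DZ.comap ((S.subtype).restrictScalars ℤ) with hDSdef
  have hDSmem : ∀ x : ↥S, x ∈ DS ↔ (x : Fin n → ℝ) ∈ DZ := fun x => Iff.rfl
  haveI hDSdisc : DiscreteTopology ↥DS := by
    rw [discreteTopology_iff_isOpen_singleton_zero]
    have hset : ({0} : Set ↥DS)
        = (fun x : ↥DS => ((x : ↥S) : Fin n → ℝ)) ⁻¹' Metric.ball 0 ε := by
      ext x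
      simp only [Set.mem_singleton_iff, Set.mem_preimage, Metric.mem_ball, dist_zero_right]
      constructor
      · rintro rfl
        simpa using hε
      · intro hx
        have hxDZ : ((x : ↥S) : Fin n → ℝ) ∈ DZ := x.2
        have h0 := hD _ hxDZ hx
        exact Subtype.ext (Subtype.ext h0)
    rw [hset]
    exact Metric.isOpen_ball.preimage (continuous_subtype_val.comp continuous_subtype_val)
  haveI hZL : IsZLattice ℝ DS := by
    constructor
    apply Submodule.map_injective_of_injective (Submodule.injective_subtype S)
    rw [Submodule.map_span, Submodule.map_top, Submodule.range_subtype]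
    have himg : (S.subtype '' (DS : Set ↥S)) = (DZ : Set (Fin n → ℝ)) := by
      ext x
      constructor
      · rintro ⟨y, hy, rfl⟩
        exact hy
      · intro hx
        exact ⟨⟨x, hDZS x hx⟩, hx, rfl⟩
    rw [himg]
    have himg2 : (DZ : Set (Fin n → ℝ)) = P '' (Λ : Set (Fin n → ℝ)) := by
      ext x
      constructor
      · intro hx
        obtain ⟨y, hy, rfl⟩ := (hDZmem x).mp hx
        exact ⟨y, hy, rfl⟩
      · rintro ⟨y, hy, rfl⟩
        exact (hDZmem _).mpr ⟨y, hy, rfl⟩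
    rw [himg2, ← Submodule.map_span, hspanΛ]
  haveI := ZLattice.module_free ℝ DS
  haveI := ZLattice.module_finite ℝ DS
  have hrkDS : finrank ℤ ↥DS = finrank ℝ ↥S := ZLattice.rank ℝ DS
  set b := Module.Free.chooseBasis ℤ ↥DS with hbdef
  set ι := Module.Free.ChooseBasisIndex ℤ ↥DS with hιdef
  have hcard : Fintype.card ι = finrank ℝ ↥S := by
    rw [← hrkDS, finrank_eq_card_chooseBasisIndex]
  -- choose preimages of basis elements
  have hbi : ∀ i : ι, ∃ y, y ∈ Λ ∧ P y = ((b i : ↥S) : Fin n → ℝ) := by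
    intro i
    have h1 : ((b i : ↥S) : Fin n → ℝ) ∈ DZ := (b i).2
    obtain ⟨y, hy, he⟩ := (hDZmem _).mp h1
    exact ⟨y, hy, he⟩
  choose δ hδΛ hδP using hbi
  set SV : Set (Fin n → ℝ) := (Λ : Set (Fin n → ℝ)) ∩ (V : Set (Fin n → ℝ)) with hSVdef
  set Msp : Submodule ℝ (Fin n → ℝ) := span ℝ (Set.range δ) ⊔ span ℝ SV with hMspdef
  -- coercion of DS into E as ℤ-linear map
  set cm : ↥DS →ₗ[ℤ] (Fin n → ℝ) := ((S.subtype).restrictScalars ℤ).comp DS.subtype with hcmdef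
  have hΛM : ∀ x ∈ Λ, x ∈ Msp := by
    intro x hx
    have hPxDZ : P x ∈ DZ := (hDZmem _).mpr ⟨x, hx, rfl⟩
    set dd : ↥DS := ⟨⟨P x, hDZS _ hPxDZ⟩, hPxDZ⟩ with hdd
    have hsum := b.sum_repr dd
    have hsumE : ∑ i, ((b.repr dd i) • ((b i : ↥S) : Fin n → ℝ)) = P x := by
      have h6 := congrArg cm hsum
      rw [map_sum] at h6
      have h7 : ∀ i : ι, cm ((b.repr dd i) • b i) = (b.repr dd i) • ((b i : ↥S) : Fin n → ℝ) :=
        fun i => map_smul cm _ _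
      rw [Finset.sum_congr rfl (fun i _ => h7 i)] at h6
      exact h6.trans rfl
    set y : Fin n → ℝ := x - ∑ i, (b.repr dd i) • δ i with hy
    have hyΛ : y ∈ Λ := by
      refine AddSubgroup.sub_mem Λ hx (AddSubgroup.sum_mem Λ (fun i _ => ?_))
      exact AddSubgroup.zsmul_mem Λ (hδΛ i) _
    have hPy : P y = 0 := by
      rw [hy, map_sub, map_sum]
      have h7 : ∀ i : ι, P ((b.repr dd i) • δ i) = (b.repr dd i) • ((b i : ↥S) : Fin n → ℝ) := by
        intro i
        rw [map_zsmul, hδP]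
      rw [Finset.sum_congr rfl (fun i _ => h7 i), hsumE, sub_self]
    have hyV : y ∈ V := hkerP y hPy
    have hsummem : (∑ i, (b.repr dd i) • δ i) ∈ span ℝ (Set.range δ) := by
      refine Submodule.sum_mem _ (fun i _ => ?_)
      rw [← Int.cast_smul_eq_zsmul ℝ]
      exact Submodule.smul_mem _ _ (Submodule.subset_span (Set.mem_range_self i))
    refine Submodule.mem_sup.mpr ⟨∑ i, (b.repr dd i) • δ i, hsummem, y, ?_, ?_⟩
    · exact Submodule.subset_span ⟨hyΛ, hyV⟩
    · rw [hy]; abel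
  -- rank count
  have hLM : L ≤ Msp := by
    rw [← hspanΛ]
    exact Submodule.span_le.mpr (fun x hx => hΛM x hx)
  have hMsple : finrank ℝ ↥Msp ≤ finrank ℝ ↥(span ℝ (Set.range δ)) + finrank ℝ ↥(span ℝ SV) := by
    have h10 := Submodule.finrank_sup_add_finrank_inf_eq (span ℝ (Set.range δ)) (span ℝ SV)
    show finrank ℝ ↥(span ℝ (Set.range δ) ⊔ span ℝ SV) ≤ _
    omega
  have hδle : finrank ℝ ↥(span ℝ (Set.range δ)) ≤ Fintype.card ι := by
    have h8 := finrank_span_le_card (R := ℝ) (Set.range δ)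
    rw [Set.toFinset_range] at h8
    exact le_trans h8 (le_trans Finset.card_image_le (by simp))
  have hspanSVle : span ℝ SV ≤ V := Submodule.span_le.mpr (fun x hx => hx.2)
  have hSVle : finrank ℝ ↥(span ℝ SV) ≤ finrank ℝ ↥V := Submodule.finrank_mono hspanSVle
  have hLle : finrank ℝ ↥L ≤ finrank ℝ ↥Msp := Submodule.finrank_mono hLM
  have hVle : finrank ℝ ↥V ≤ finrank ℝ ↥(span ℝ SV) := by
    have c1 : finrank ℝ ↥L ≤ Fintype.card ι + finrank ℝ ↥(span ℝ SV) :=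
      le_trans hLle (le_trans hMsple (Nat.add_le_add_right hδle _))
    rw [hcard] at c1
    omega
  have hVspan : span ℝ SV = V :=
    Submodule.eq_of_le_of_finrank_le hspanSVle hVle
  -- rationality of V
  obtain ⟨b₀, hb₀sub, hb₀span, hb₀li⟩ := exists_linearIndependent ℝ SV
  have hb₀fin := hb₀li.setFinite
  haveI := hb₀fin.fintype
  have hb₀V : span ℝ b₀ = V := by rw [hb₀span, hVspan]
  have hchoice : ∀ x : ↥b₀, ∃ k : Fin n → ℤ, intVec k = (x : Fin n → ℝ) := by
    intro x
    exact ((hb₀sub x.2).1).2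
  choose kk hkk using hchoice
  set T₀ : Finset (Fin n → ℤ) := Finset.univ.image kk with hT₀
  have himgT : intVec '' ↑T₀ = b₀ := by
    ext x
    constructor
    · rintro ⟨k, hk, rfl⟩
      simp only [hT₀, Finset.coe_image, Finset.coe_univ, Set.image_univ, Set.mem_range] at hk
      obtain ⟨y, rfl⟩ := hk
      rw [hkk]
      exact y.2
    · intro hx
      refine ⟨kk ⟨x, hx⟩, ?_, hkk _⟩
      simp only [hT₀, Finset.coe_image, Finset.coe_univ, Set.image_univ, Set.mem_range]
      exact ⟨⟨x, hx⟩, rfl⟩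
  have hVrat : IsRationalSubspace V := ⟨T₀, by rw [himgT, hb₀V]⟩
  -- conclude
  have hLV : L ≤ V := hmin V hVrat hJV
  have hsetEq : (⋃ (k : Fin n → ℤ) (_ : intVec k ∈ L), (fun x => x + intVec k) '' (J : Set (Fin n → ℝ)))
      = (H : Set (Fin n → ℝ)) := by
    ext x
    simp only [Set.mem_iUnion, Set.mem_image, SetLike.mem_coe]
    constructor
    · rintro ⟨k, hk, j, hjJ, rfl⟩
      exact AddSubgroup.mem_sup.mpr ⟨j, Submodule.mem_toAddSubgroup J |>.mpr hjJ,
        intVec k, (hΛmem _).mpr ⟨hk, k, rfl⟩, rfl⟩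
    · intro hx
      obtain ⟨y, hy, z, hz, rfl⟩ := AddSubgroup.mem_sup.mp hx
      obtain ⟨hzL, k, rfl⟩ := (hΛmem z).mp hz
      exact ⟨k, hzL, y, (Submodule.mem_toAddSubgroup J).mp hy, rfl⟩
  intro x hx
  rw [hsetEq]
  have hxV : x ∈ V := hLV hx
  exact hVG hxV
end
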